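/- Let n, d be natural numbers, γ ∈ ℝ with γ ≠ 0, fix ξ, x ∈ ℝ^n and t ∈ ℝ, and set l(τ) = √(‖x − ξ‖² + (t − τ)²). Let U : ℝ → ℝ^d be differentiable on an open interval I with γ • U'(τ) = F(τ) for some function F : ℝ → ℝ^d, and let M : ℝ^d × ℝ → ℝ^d be continuously Fréchet differentiable. Suppose there is a constant c ∈ ℝ^d such that l(τ) • M(U(τ), τ) = c − U(τ) for all τ ∈ I. Then for every τ ∈ I with l(τ) > 0, the temporal MeanFlow constraint holds: (t − τ) • M(U(τ), τ) = l(τ) • [γ⁻¹ • F(τ) + l(τ) • D_u M(U(τ), τ)(γ⁻¹ • F(τ))] + l(τ)² • ∂_τ M(U(τ), τ). -/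

import Mathlib

/-- Temporal MeanFlow constraint. Differentiating the fundamental
identity `l τ • M (U τ, τ) = c − U τ` along the open interval `I = Ioo a b`, where
`γ • U' τ = F τ` encodes the governing PDE, yields
`(t − τ) • M = l • (γ⁻¹ • F + l • D_u M (γ⁻¹ • F)) + l² • ∂_τ M`.
Partial Fréchet derivatives of `M` are encoded via the full Fréchet derivative:
`D_u M (U τ, τ) v = fderiv ℝ M (U τ, τ) (v, 0)` and
`∂_τ M (U τ, τ) = fderiv ℝ M (U τ, τ) (0, 1)`. -/
theorem stmt_3 (n d : ℕ) (γ : ℝ) (hγ : γ ≠ 0)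
    (ξ x : EuclideanSpace ℝ (Fin n)) (t : ℝ)
    (l : ℝ → ℝ)
    (hl : ∀ τ : ℝ, l τ = Real.sqrt (‖x - ξ‖ ^ 2 + (t - τ) ^ 2))
    (a b : ℝ)
    (U U' F : ℝ → EuclideanSpace ℝ (Fin d))
    (hU : ∀ τ ∈ Set.Ioo a b, HasDerivAt U (U' τ) τ)
    (hF : ∀ τ ∈ Set.Ioo a b, γ • U' τ = F τ)
    (M : EuclideanSpace ℝ (Fin d) × ℝ → EuclideanSpace ℝ (Fin d))
    (hM : ContDiff ℝ 1 M)
    (c : EuclideanSpace ℝ (Fin d))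
    (hc : ∀ τ ∈ Set.Ioo a b, l τ • M (U τ, τ) = c - U τ) :
    ∀ τ ∈ Set.Ioo a b, 0 < l τ →
      (t - τ) • M (U τ, τ)
        = l τ • (γ⁻¹ • F τ + l τ • (fderiv ℝ M (U τ, τ)) (γ⁻¹ • F τ, 0))
          + (l τ) ^ 2 • (fderiv ℝ M (U τ, τ)) (0, 1) := by
  intro τ hτ hlpos
  set L := l τ with hLdef
  have hLne : L ≠ 0 := ne_of_gt hlpos
  -- derivative of the inner function s σ = ‖x-ξ‖² + (t-σ)²
  have hs : HasDerivAt (fun σ : ℝ => ‖x - ξ‖ ^ 2 + (t - σ) ^ 2) (-(2 * (t - τ))) τ := by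
    have h1 : HasDerivAt (fun σ : ℝ => t - σ) (-1) τ := by
      simpa using (hasDerivAt_id τ).const_sub t
    have h2 := (h1.pow 2).const_add (‖x - ξ‖ ^ 2)
    simpa using h2
  have hsne : ‖x - ξ‖ ^ 2 + (t - τ) ^ 2 ≠ 0 := by
    intro h0
    have : L = 0 := by rw [hLdef, hl τ, h0, Real.sqrt_zero]
    exact hLne this
  -- derivative of l
  have hspos : 0 < ‖x - ξ‖ ^ 2 + (t - τ) ^ 2 :=
    lt_of_le_of_ne (by positivity) (Ne.symm hsne)
  have hsqne : Real.sqrt (‖x - ξ‖ ^ 2 + (t - τ) ^ 2) ≠ 0 :=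
    ne_of_gt (Real.sqrt_pos.mpr hspos)
  have hl' : HasDerivAt l (-(t - τ) / L) τ := by
    have h3 := (Real.hasDerivAt_sqrt hsne).comp τ hs
    have h4 : HasDerivAt (fun σ : ℝ => Real.sqrt (‖x - ξ‖ ^ 2 + (t - σ) ^ 2))
        (1 / (2 * Real.sqrt (‖x - ξ‖ ^ 2 + (t - τ) ^ 2)) * -(2 * (t - τ))) τ := h3
    have heqf : (fun σ : ℝ => Real.sqrt (‖x - ξ‖ ^ 2 + (t - σ) ^ 2)) = l := by
      funext σ; rw [hl σ]
    rw [heqf] at h4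
    convert h4 using 1
    rw [hLdef, hl τ]
    field_simp
  -- derivative of σ ↦ M (U σ, σ)
  have hUV : HasDerivAt (fun σ : ℝ => (U σ, σ)) (U' τ, 1) τ :=
    (hU τ hτ).prodMk (hasDerivAt_id τ)
  have hMd : HasDerivAt (fun σ : ℝ => M (U σ, σ)) ((fderiv ℝ M (U τ, τ)) (U' τ, 1)) τ := by
    have hMf : HasFDerivAt M (fderiv ℝ M (U τ, τ)) (U τ, τ) :=
      (hM.differentiable one_ne_zero (U τ, τ)).hasFDerivAt
    have := HasFDerivAt.comp_hasDerivAt_of_eq τ hMf hUV rfl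
    exact this
  -- derivative of LHS
  have hg := hl'.smul hMd
  have hh : HasDerivAt (fun σ => c - U σ) (-(U' τ)) τ := (hU τ hτ).const_sub c
  have heq : (fun σ => l σ • M (U σ, σ)) =ᶠ[nhds τ] (fun σ => c - U σ) :=
    Filter.eventuallyEq_of_mem (isOpen_Ioo.mem_nhds hτ) hc
  have key : L • (fderiv ℝ M (U τ, τ)) (U' τ, 1) + (-(t - τ) / L) • M (U τ, τ)
      = -(U' τ) := (hg.congr_of_eventuallyEq heq.symm).unique hh
  -- U' τ = γ⁻¹ • F τ
  have hU'F : U' τ = γ⁻¹ • F τ := by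
    rw [← hF τ hτ, smul_smul, inv_mul_cancel₀ hγ, one_smul]
  -- multiply key by L
  have key2 : L • (L • (fderiv ℝ M (U τ, τ)) (U' τ, 1) + (-(t - τ) / L) • M (U τ, τ))
      = L • (-(U' τ)) := by rw [key]
  rw [smul_add, smul_smul (L) (-(t - τ) / L), mul_div_cancel₀ _ hLne] at key2
  have key3 : (t - τ) • M (U τ, τ)
      = L • U' τ + L • L • (fderiv ℝ M (U τ, τ)) (U' τ, 1) := by
    linear_combination (norm := module) -key2
  rw [hU'F] at key3
  have hsplit : (fderiv ℝ M (U τ, τ)) (γ⁻¹ • F τ, 1)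
      = (fderiv ℝ M (U τ, τ)) (γ⁻¹ • F τ, 0) + (fderiv ℝ M (U τ, τ)) (0, 1) := by
    rw [← ContinuousLinearMap.map_add]
    norm_num
  rw [key3, hsplit]
  module
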